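/- arXiv:1210.4094 — 2 statements merged into one kernel-verified Lean document; each statement's English description precedes it below -/
import Mathlib

section
/- In a group G, the intersection of two rational subsets need not be considered; but for free groups, the class of rational subsets is closed under intersection and complement (Benois' theorem consequence). -/
open Pointwise

/-- The rational subsets of a monoid: the smallest class containing finite sets
and closed under union, product, and generated submonoid (star). -/
inductive IsRational {M : Type*} [Monoid M] : Set M → Prop
  | finite (s : Set M) : s.Finite → IsRational s
  | union (s t : Set M) : IsRational s → IsRational t → IsRational (s ∪ t)
  | mul (s t : Set M) : IsRational s → IsRational t → IsRational (s * t)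
  | star (s : Set M) : IsRational s → IsRational ((Submonoid.closure s : Submonoid M) : Set M)

set_option linter.unusedSectionVars false
set_option maxHeartbeats 1000000

namespace Benois

variable {α : Type} {σ σ' : Type}

/-- concatenation of word-set languages -/
def cat (L₁ L₂ : Set (List α)) : Set (List α) := {x | ∃ a ∈ L₁, ∃ b ∈ L₂, a ++ b = x}

/-- Kleene star of a word-set language -/
def kst (L : Set (List α)) : Set (List α) :=
  {x | ∃ S : List (List α), x = S.flatten ∧ ∀ y ∈ S, y ∈ L}

/-- view a language as a set of words -/
def asSet (L : Language α) : Set (List α) := L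

/-- NFA-recognizable languages (with state type in `Type 0`). -/
def Recog (L : Set (List α)) : Prop :=
  ∃ (σ : Type) (_ : Fintype σ) (M : NFA α σ), asSet M.accepts = L

lemma nfa_evalFrom_append (M : NFA α σ) (S : Set σ) (x y : List α) :
    M.evalFrom S (x ++ y) = M.evalFrom (M.evalFrom S x) y :=
  List.foldl_append

lemma nfa_evalFrom_cons (M : NFA α σ) (S : Set σ) (a : α) (x : List α) :
    M.evalFrom S (a :: x) = M.evalFrom (M.stepSet S a) x := rfl

lemma nfa_evalFrom_append_singleton (M : NFA α σ) (S : Set σ) (x : List α) (a : α) :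
    M.evalFrom S (x ++ [a]) = M.stepSet (M.evalFrom S x) a := by
  rw [nfa_evalFrom_append]; rfl

lemma nfa_evalFrom_empty (M : NFA α σ) (x : List α) : M.evalFrom ∅ x = ∅ := by
  induction x with
  | nil => rfl
  | cons a x ih =>
    rw [nfa_evalFrom_cons, M.stepSet_empty a]; exact ih

lemma nfa_stepSet_union (M : NFA α σ) (S T : Set σ) (a : α) :
    M.stepSet (S ∪ T) a = M.stepSet S a ∪ M.stepSet T a := by
  ext q; simp [NFA.mem_stepSet, or_and_right, exists_or]

lemma mem_accepts' (M : NFA α σ) (x : List α) :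
    x ∈ asSet M.accepts ↔ ∃ q ∈ M.accept, q ∈ M.evalFrom M.start x :=
  M.mem_accepts

lemma mem_evalFrom_iff (M : NFA α σ) {S : Set σ} {w : List α} {q : σ} :
    q ∈ M.evalFrom S w ↔ ∃ p ∈ S, q ∈ M.evalFrom {p} w := by
  induction w generalizing S with
  | nil => simp [NFA.evalFrom]
  | cons a w ih =>
    simp only [nfa_evalFrom_cons]
    rw [ih]
    constructor
    · rintro ⟨s, hs, hq⟩
      rw [NFA.mem_stepSet] at hs
      obtain ⟨p, hp, hsp⟩ := hs
      exact ⟨p, hp, ih.2 ⟨s, by rw [NFA.mem_stepSet]; exact ⟨p, rfl, hsp⟩, hq⟩⟩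
    · rintro ⟨p, hp, hq⟩
      rw [ih] at hq
      obtain ⟨s, hs, hq⟩ := hq
      rw [NFA.mem_stepSet] at hs
      obtain ⟨p', hp', hs⟩ := hs
      rcases hp' with rfl
      exact ⟨s, by rw [NFA.mem_stepSet]; exact ⟨p', hp, hs⟩, hq⟩

lemma recog_empty : Recog (∅ : Set (List α)) := by
  refine ⟨PUnit, inferInstance, ⟨fun _ _ => ∅, ∅, ∅⟩, ?_⟩
  ext x; rw [mem_accepts']
  constructor
  · rintro ⟨q, hq, _⟩; exact absurd hq (Set.notMem_empty q)
  · intro h; exact absurd h (Set.notMem_empty x)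

lemma recog_epsilon : Recog ({[]} : Set (List α)) := by
  refine ⟨PUnit, inferInstance, ⟨fun _ _ => ∅, Set.univ, Set.univ⟩, ?_⟩
  set M : NFA α PUnit := ⟨fun _ _ => ∅, Set.univ, Set.univ⟩
  ext x
  rw [mem_accepts']
  cases x with
  | nil =>
    simp only [NFA.evalFrom, List.foldl_nil]
    constructor
    · intro _; exact Set.mem_singleton _
    · intro _; exact ⟨PUnit.unit, Set.mem_univ _, Set.mem_univ _⟩
  | cons a x =>
    have h : M.evalFrom Set.univ (a :: x) = ∅ := by
      rw [nfa_evalFrom_cons]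
      have h0 : M.stepSet Set.univ a = ∅ := by ext q; simp [NFA.mem_stepSet, M]
      rw [h0]; exact nfa_evalFrom_empty _ _
    rw [show M.start = Set.univ from rfl, h]
    constructor
    · rintro ⟨q, _, hq⟩; exact absurd hq (Set.notMem_empty q)
    · intro hx; exact absurd (Set.mem_singleton_iff.1 hx) (by simp)

lemma recog_char [DecidableEq α] (b : α) : Recog ({[b]} : Set (List α)) := by
  classical
  refine ⟨Bool, inferInstance, ⟨fun p a => if p = false ∧ a = b then {true} else ∅,
    {false}, {true}⟩, ?_⟩
  set M : NFA α Bool := ⟨fun p a => if p = false ∧ a = b then {true} else ∅,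
    {false}, {true}⟩ with hM
  ext x
  rw [mem_accepts', Set.mem_singleton_iff]
  rcases x with _ | ⟨a, (_ | ⟨c, t⟩)⟩
  · simp only [NFA.evalFrom, List.foldl_nil]
    constructor
    · rintro ⟨q, hq, hq2⟩
      rcases Set.mem_singleton_iff.1 hq with rfl
      rcases Set.mem_singleton_iff.1 hq2 with h
      exact absurd h (by simp [M])
    · intro h; exact absurd h (by simp)
  · have h1 : M.evalFrom {false} [a] = M.stepSet {false} a := rfl
    have hs : M.start = {false} := rfl
    rw [hs, h1]
    simp only [NFA.mem_stepSet, Set.mem_singleton_iff]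
    by_cases hab : a = b <;> simp [M, hab, List.cons.injEq]
  · have h2 : M.stepSet (M.stepSet {false} a) c = ∅ := by
      ext s
      simp only [NFA.mem_stepSet, Set.mem_empty_iff_false, iff_false, not_exists]
      rintro u ⟨⟨v, hv, hu⟩, hs⟩
      simp only [Set.mem_singleton_iff] at hv
      subst hv
      by_cases h : a = b
      · simp [M, h] at hu
        subst hu
        simp [M] at hs
      · simp [M, h] at hu
    have e1 : M.evalFrom M.start (a :: c :: t) = M.evalFrom (M.stepSet (M.stepSet {false} a) c) t := rfl
    rw [e1, h2, nfa_evalFrom_empty]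
    constructor
    · rintro ⟨q, _, hq⟩; exact absurd hq (Set.notMem_empty q)
    · intro h; exact absurd h (by simp)

lemma recog_union {L₁ L₂ : Set (List α)} (h₁ : Recog L₁) (h₂ : Recog L₂) :
    Recog (L₁ ∪ L₂) := by
  obtain ⟨σ₁, i₁, M₁, rfl⟩ := h₁
  obtain ⟨σ₂, i₂, M₂, rfl⟩ := h₂
  refine ⟨σ₁ ⊕ σ₂, inferInstance,
    ⟨fun p a => Sum.elim (fun p => Sum.inl '' M₁.step p a) (fun p => Sum.inr '' M₂.step p a) p,
     Sum.inl '' M₁.start ∪ Sum.inr '' M₂.start,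
     Sum.inl '' M₁.accept ∪ Sum.inr '' M₂.accept⟩, ?_⟩
  set M : NFA α (σ₁ ⊕ σ₂) :=
    ⟨fun p a => Sum.elim (fun p => Sum.inl '' M₁.step p a) (fun p => Sum.inr '' M₂.step p a) p,
     Sum.inl '' M₁.start ∪ Sum.inr '' M₂.start,
     Sum.inl '' M₁.accept ∪ Sum.inr '' M₂.accept⟩
  have key : ∀ (x : List α) (S₁ : Set σ₁) (S₂ : Set σ₂),
      M.evalFrom (Sum.inl '' S₁ ∪ Sum.inr '' S₂) x
        = Sum.inl '' M₁.evalFrom S₁ x ∪ Sum.inr '' M₂.evalFrom S₂ x := by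
    intro x
    induction x with
    | nil => intro S₁ S₂; rfl
    | cons a x ih =>
      intro S₁ S₂
      rw [nfa_evalFrom_cons]
      have hstep : M.stepSet (Sum.inl '' S₁ ∪ Sum.inr '' S₂) a
          = Sum.inl '' M₁.stepSet S₁ a ∪ Sum.inr '' M₂.stepSet S₂ a := by
        ext q
        cases q with
        | inl q => simp [NFA.mem_stepSet, M]
        | inr q => simp [NFA.mem_stepSet, M]
      rw [hstep, ih]
      rfl
  ext x
  rw [mem_accepts']
  have hK := key x M₁.start M₂.start
  have hs : M.start = Sum.inl '' M₁.start ∪ Sum.inr '' M₂.start := rfl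
  have ha : M.accept = Sum.inl '' M₁.accept ∪ Sum.inr '' M₂.accept := rfl
  rw [hs, hK, ha, Set.mem_union, mem_accepts', mem_accepts']
  constructor
  · rintro ⟨q, hq, hq2⟩
    rcases hq with ⟨p, hp, rfl⟩ | ⟨p, hp, rfl⟩
    · rcases hq2 with ⟨pp, hpp, h⟩ | ⟨pp, hpp, h⟩
      · obtain rfl : pp = p := by injection h
        exact Or.inl ⟨pp, hp, hpp⟩
      · exact absurd h (by simp)
    · rcases hq2 with ⟨pp, hpp, h⟩ | ⟨pp, hpp, h⟩
      · exact absurd h (by simp)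
      · obtain rfl : pp = p := by injection h
        exact Or.inr ⟨pp, hp, hpp⟩
  · rintro (⟨q, hq, hq2⟩ | ⟨q, hq, hq2⟩)
    · exact ⟨Sum.inl q, Or.inl ⟨q, hq, rfl⟩, Or.inl ⟨q, hq2, rfl⟩⟩
    · exact ⟨Sum.inr q, Or.inr ⟨q, hq, rfl⟩, Or.inr ⟨q, hq2, rfl⟩⟩


section Cat

variable {σ₁ σ₂ : Type} (M₁ : NFA α σ₁) (M₂ : NFA α σ₂)

/-- concatenation NFA -/
def catNFA : NFA α (σ₁ ⊕ σ₂) where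
  step := fun t a => match t with
    | Sum.inl p => Sum.inl '' M₁.step p a ∪
        {q | (∃ s ∈ M₁.step p a, s ∈ M₁.accept) ∧ ∃ s ∈ M₂.start, q = Sum.inr s}
    | Sum.inr p => Sum.inr '' M₂.step p a
  start := Sum.inl '' M₁.start ∪
      {q | (∃ s ∈ M₁.start, s ∈ M₁.accept) ∧ ∃ s ∈ M₂.start, q = Sum.inr s}
  accept := Sum.inr '' M₂.accept

lemma catNFA_key (x : List α) (q : σ₁ ⊕ σ₂) :
    q ∈ (catNFA M₁ M₂).evalFrom (catNFA M₁ M₂).start x ↔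
      ((∃ p, q = Sum.inl p ∧ p ∈ M₁.evalFrom M₁.start x) ∨
       (∃ s, q = Sum.inr s ∧ ∃ u v, u ++ v = x ∧ u ∈ asSet M₁.accepts ∧
          s ∈ M₂.evalFrom M₂.start v)) := by
  induction x using List.reverseRecOn generalizing q with
  | nil =>
    show q ∈ (catNFA M₁ M₂).start ↔ _
    constructor
    · rintro (⟨p, hp, rfl⟩ | ⟨⟨s, hs, hs'⟩, ⟨t, ht, rfl⟩⟩)
      · exact Or.inl ⟨p, rfl, hp⟩
      · refine Or.inr ⟨t, rfl, [], [], rfl, ?_, ht⟩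
        exact (mem_accepts' M₁ []).2 ⟨s, hs', hs⟩
    · rintro (⟨p, rfl, hp⟩ | ⟨s, rfl, u, v, huv, hu, hv⟩)
      · exact Or.inl ⟨p, hp, rfl⟩
      · rcases List.append_eq_nil_iff.1 huv with ⟨rfl, rfl⟩
        obtain ⟨t, ht, ht'⟩ := (mem_accepts' M₁ []).1 hu
        exact Or.inr ⟨⟨t, ht', ht⟩, ⟨s, hv, rfl⟩⟩
  | append_singleton x a ih =>
    rw [nfa_evalFrom_append]
    show q ∈ (catNFA M₁ M₂).stepSet _ a ↔ _
    rw [NFA.mem_stepSet]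
    constructor
    · rintro ⟨t, ht, hq⟩
      rcases (ih t).1 ht with ⟨p, rfl, hp⟩ | ⟨s, rfl, u, v, huv, hu, hv⟩
      · -- t = inl p
        rcases hq with ⟨p', hp', rfl⟩ | ⟨⟨s, hs, hs'⟩, ⟨t', ht', rfl⟩⟩
        · refine Or.inl ⟨p', rfl, ?_⟩
          rw [nfa_evalFrom_append_singleton M₁, NFA.mem_stepSet]
          exact ⟨p, hp, hp'⟩
        · refine Or.inr ⟨t', rfl, x ++ [a], [], by simp, ?_, ht'⟩
          rw [mem_accepts']
          refine ⟨s, hs', ?_⟩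
          rw [nfa_evalFrom_append_singleton M₁, NFA.mem_stepSet]
          exact ⟨p, hp, hs⟩
      · -- t = inr s
        rcases hq with ⟨s', hs', rfl⟩
        refine Or.inr ⟨s', rfl, u, v ++ [a], by rw [← List.append_assoc, huv], hu, ?_⟩
        rw [nfa_evalFrom_append_singleton M₂, NFA.mem_stepSet]
        exact ⟨s, hv, hs'⟩
    · rintro (⟨p, rfl, hp⟩ | ⟨s, rfl, u, v, huv, hu, hv⟩)
      · rw [nfa_evalFrom_append_singleton M₁, NFA.mem_stepSet] at hp
        obtain ⟨p', hp', hstep⟩ := hp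
        exact ⟨Sum.inl p', (ih _).2 (Or.inl ⟨p', rfl, hp'⟩), Or.inl ⟨p, hstep, rfl⟩⟩
      · -- split u ++ v = x ++ [a]
        rcases v.eq_nil_or_concat with rfl | ⟨v', b, rfl⟩
        · -- v = [], u = x ++ [a] ∈ L₁ : junction
          rw [List.append_nil] at huv
          subst huv
          rw [mem_accepts'] at hu
          obtain ⟨f, hf, hf'⟩ := hu
          rw [nfa_evalFrom_append_singleton M₁, NFA.mem_stepSet] at hf'
          obtain ⟨p, hp, hstep⟩ := hf'
          refine ⟨Sum.inl p, (ih _).2 (Or.inl ⟨p, rfl, hp⟩), Or.inr ⟨⟨f, hstep, hf⟩, ⟨s, hv, rfl⟩⟩⟩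
        · -- v = v' ++ [b]; then b = a and u ++ v' = x
          rw [List.concat_eq_append] at huv hv
          rw [← List.append_assoc] at huv
          obtain ⟨huv', rfl⟩ : u ++ v' = x ∧ b = a := by
            have h1 := List.append_inj' huv rfl
            exact ⟨h1.1, by simpa using h1.2⟩
          rw [nfa_evalFrom_append_singleton M₂, NFA.mem_stepSet] at hv
          obtain ⟨t, ht, hstep⟩ := hv
          exact ⟨Sum.inr t, (ih _).2 (Or.inr ⟨t, rfl, u, v', huv', hu, ht⟩),
            ⟨s, hstep, rfl⟩⟩

lemma recog_cat {L₁ L₂ : Set (List α)} (h₁ : Recog L₁) (h₂ : Recog L₂) :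
    Recog (cat L₁ L₂) := by
  obtain ⟨σ₁, i₁, M₁, rfl⟩ := h₁
  obtain ⟨σ₂, i₂, M₂, rfl⟩ := h₂
  refine ⟨σ₁ ⊕ σ₂, inferInstance, catNFA M₁ M₂, ?_⟩
  ext x
  rw [mem_accepts']
  constructor
  · rintro ⟨q, hq, hq2⟩
    obtain ⟨s, hs, rfl⟩ := hq
    rcases (catNFA_key M₁ M₂ x _).1 hq2 with ⟨p, hp, _⟩ | ⟨s', heq, u, v, huv, hu, hv⟩
    · exact absurd hp (by simp)
    · obtain h' : s = s' := by injection heq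
      subst h'
      exact ⟨u, hu, v, (mem_accepts' M₂ v).2 ⟨s, hs, hv⟩, huv⟩
  · rintro ⟨u, hu, v, hv, rfl⟩
    rw [mem_accepts'] at hv
    obtain ⟨s, hs, hs'⟩ := hv
    exact ⟨Sum.inr s, ⟨s, hs, rfl⟩, (catNFA_key M₁ M₂ _ _).2 (Or.inr ⟨s, rfl, u, v, rfl, hu, hs'⟩)⟩

end Cat


section Star

lemma kst_nil {L : Set (List α)} : [] ∈ kst L := ⟨[], rfl, by simp⟩

lemma kst_append {L : Set (List α)} {u v : List α} (hu : u ∈ kst L) (hv : v ∈ L) :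
    u ++ v ∈ kst L := by
  obtain ⟨S, rfl, hS⟩ := hu
  refine ⟨S ++ [v], by simp, ?_⟩
  intro y hy
  rcases List.mem_append.1 hy with h | h
  · exact hS y h
  · rcases List.mem_singleton.1 h with rfl; exact hv

lemma kst_last {L : Set (List α)} {x : List α} (hx : x ∈ kst L) (hne : x ≠ []) :
    ∃ u w, u ∈ kst L ∧ w ∈ L ∧ w ≠ [] ∧ u ++ w = x := by
  obtain ⟨S, rfl, hS⟩ := hx
  induction S using List.reverseRecOn with
  | nil => simp at hne
  | append_singleton S w ih =>
    rw [List.flatten_append, List.flatten_cons, List.flatten_nil, List.append_nil] at *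
    rcases eq_or_ne w [] with rfl | hw
    · rw [List.append_nil] at hne ⊢
      exact ih (fun y hy => hS y (List.mem_append_left _ hy)) hne
    · exact ⟨S.flatten, w, ⟨S, rfl, fun y hy => hS y (List.mem_append_left _ hy)⟩,
        hS w (by simp), hw, rfl⟩

variable {σ₁ : Type} (M₁ : NFA α σ₁)

/-- Kleene star NFA -/
def starNFA : NFA α (Option σ₁) where
  step := fun t a => match t with
    | none => ∅
    | some p => some '' M₁.step p a ∪
        {q | (∃ s ∈ M₁.step p a, s ∈ M₁.accept) ∧ ∃ s ∈ M₁.start, q = some s}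
  start := insert none (some '' M₁.start)
  accept := insert none (some '' M₁.accept)

lemma starNFA_key (x : List α) (q : Option σ₁) :
    q ∈ (starNFA M₁).evalFrom (starNFA M₁).start x ↔
      ((q = none ∧ x = []) ∨
       (∃ p, q = some p ∧ ∃ u v, u ++ v = x ∧ u ∈ kst (asSet M₁.accepts) ∧
          p ∈ M₁.evalFrom M₁.start v)) := by
  induction x using List.reverseRecOn generalizing q with
  | nil =>
    show q ∈ insert none (some '' M₁.start) ↔ _
    constructor
    · rintro (rfl | ⟨p, hp, rfl⟩)
      · exact Or.inl ⟨rfl, rfl⟩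
      · exact Or.inr ⟨p, rfl, [], [], rfl, kst_nil, hp⟩
    · rintro (⟨rfl, _⟩ | ⟨p, rfl, u, v, huv, _, hv⟩)
      · exact Set.mem_insert _ _
      · rcases List.append_eq_nil_iff.1 huv with ⟨rfl, rfl⟩
        exact Set.mem_insert_of_mem _ ⟨p, hv, rfl⟩
  | append_singleton x a ih =>
    rw [nfa_evalFrom_append]
    show q ∈ (starNFA M₁).stepSet _ a ↔ _
    rw [NFA.mem_stepSet]
    constructor
    · rintro ⟨t, ht, hq⟩
      rcases (ih t).1 ht with ⟨rfl, rfl⟩ | ⟨p, rfl, u, v, huv, hu, hv⟩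
      · exact absurd hq (by simp [starNFA])
      · rcases hq with ⟨p', hp', rfl⟩ | ⟨⟨s, hs, hs'⟩, ⟨t', ht', rfl⟩⟩
        · refine Or.inr ⟨p', rfl, u, v ++ [a], by rw [← List.append_assoc, huv], hu, ?_⟩
          rw [nfa_evalFrom_append_singleton M₁, NFA.mem_stepSet]
          exact ⟨p, hv, hp'⟩
        · -- loop back: u ++ (v ++ [a]) ∈ kst L₁
          refine Or.inr ⟨t', rfl, x ++ [a], [], by simp, ?_, ht'⟩
          have hva : v ++ [a] ∈ asSet M₁.accepts := by
            rw [mem_accepts']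
            refine ⟨s, hs', ?_⟩
            rw [nfa_evalFrom_append_singleton M₁, NFA.mem_stepSet]
            exact ⟨p, hv, hs⟩
          have := kst_append hu hva
          rwa [← List.append_assoc, huv] at this
    · rintro (⟨_, hx⟩ | ⟨p, rfl, u, v, huv, hu, hv⟩)
      · exact absurd hx (by simp)
      · rcases v.eq_nil_or_concat with rfl | ⟨v', b, rfl⟩
        · -- v = [] : u = x ++ [a] ∈ kst L₁, p ∈ M₁.start : use kst_last
          rw [List.append_nil] at huv
          subst huv
          obtain ⟨u', w, hu', hw, hwne, happ⟩ := kst_last hu (by simp)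
          rcases w.eq_nil_or_concat with rfl | ⟨w', b, rfl⟩
          · exact absurd rfl hwne
          · rw [List.concat_eq_append] at happ hw
            rw [← List.append_assoc] at happ
            obtain ⟨happ', rfl⟩ : u' ++ w' = x ∧ b = a := by
              have h1 := List.append_inj' happ rfl
              exact ⟨h1.1, by simpa using h1.2⟩
            rw [mem_accepts'] at hw
            obtain ⟨f, hf, hf'⟩ := hw
            rw [nfa_evalFrom_append_singleton M₁, NFA.mem_stepSet] at hf'
            obtain ⟨t, ht, hstep⟩ := hf'
            refine ⟨some t, (ih _).2 (Or.inr ⟨t, rfl, u', w', happ', hu', ht⟩),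
              Or.inr ⟨⟨f, hstep, hf⟩, ⟨p, hv, rfl⟩⟩⟩
        · rw [List.concat_eq_append] at huv hv
          rw [← List.append_assoc] at huv
          obtain ⟨huv', rfl⟩ : u ++ v' = x ∧ b = a := by
            have h1 := List.append_inj' huv rfl
            exact ⟨h1.1, by simpa using h1.2⟩
          rw [nfa_evalFrom_append_singleton M₁, NFA.mem_stepSet] at hv
          obtain ⟨t, ht, hstep⟩ := hv
          exact ⟨some t, (ih _).2 (Or.inr ⟨t, rfl, u, v', huv', hu, ht⟩),
            Or.inl ⟨p, hstep, rfl⟩⟩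

lemma recog_kst {L : Set (List α)} (h : Recog L) : Recog (kst L) := by
  obtain ⟨σ₁, i₁, M₁, rfl⟩ := h
  refine ⟨Option σ₁, inferInstance, starNFA M₁, ?_⟩
  ext x
  rw [mem_accepts']
  constructor
  · rintro ⟨q, hq, hq2⟩
    rcases (starNFA_key M₁ x q).1 hq2 with ⟨rfl, rfl⟩ | ⟨p, rfl, u, v, huv, hu, hv⟩
    · exact kst_nil
    · rcases hq with h | ⟨p', hp', heq⟩
      · exact absurd h (by simp)
      · obtain h' : p' = p := by injection heq
        subst h'
        have hvL : v ∈ asSet M₁.accepts := (mem_accepts' M₁ v).2 ⟨p', hp', hv⟩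
        rw [← huv]
        exact kst_append hu hvL
  · intro hx
    rcases eq_or_ne x [] with rfl | hne
    · exact ⟨none, Set.mem_insert _ _, (starNFA_key M₁ [] none).2 (Or.inl ⟨rfl, rfl⟩)⟩
    · obtain ⟨u, w, hu, hw, hwne, happ⟩ := kst_last hx hne
      rw [mem_accepts'] at hw
      obtain ⟨f, hf, hf'⟩ := hw
      exact ⟨some f, Set.mem_insert_of_mem _ ⟨f, hf, rfl⟩,
        (starNFA_key M₁ x (some f)).2 (Or.inr ⟨f, rfl, u, w, happ, hu, hf'⟩)⟩

end Star


section BoolOps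

lemma recog_of_dfa {σ : Type} [Fintype σ] (D : DFA α σ) : Recog (asSet D.accepts) :=
  ⟨σ, inferInstance, D.toNFA, by rw [DFA.toNFA_correct]⟩

lemma recog_dfa {L : Set (List α)} (h : Recog L) :
    ∃ (σ : Type) (_ : Fintype σ) (D : DFA α σ), asSet D.accepts = L := by
  obtain ⟨σ, iσ, M, rfl⟩ := h
  haveI : Fintype (Set σ) := Fintype.ofFinite _
  exact ⟨Set σ, inferInstance, M.toDFA, by rw [NFA.toDFA_correct]⟩

lemma recog_compl {L : Set (List α)} (h : Recog L) : Recog Lᶜ := by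
  obtain ⟨σ, iσ, D, rfl⟩ := recog_dfa h
  have : asSet (⟨D.step, D.start, D.acceptᶜ⟩ : DFA α σ).accepts =
      (asSet D.accepts)ᶜ := by
    ext x
    show _ ∈ (⟨D.step, D.start, D.acceptᶜ⟩ : DFA α σ).accept ↔ _
    show _ ↔ ¬ (DFA.evalFrom D D.start x ∈ D.accept)
    exact Iff.rfl
  exact this ▸ recog_of_dfa _

lemma dfa_prod_eval {σ₁ σ₂ : Type} (D₁ : DFA α σ₁) (D₂ : DFA α σ₂)
    (p : σ₁) (q : σ₂) (x : List α) :
    (⟨fun t a => (D₁.step t.1 a, D₂.step t.2 a), (D₁.start, D₂.start),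
      {t | t.1 ∈ D₁.accept ∧ t.2 ∈ D₂.accept}⟩ : DFA α (σ₁ × σ₂)).evalFrom (p, q) x
      = (D₁.evalFrom p x, D₂.evalFrom q x) := by
  induction x generalizing p q with
  | nil => rfl
  | cons a x ih => exact ih _ _

lemma recog_inter {L₁ L₂ : Set (List α)} (h₁ : Recog L₁) (h₂ : Recog L₂) :
    Recog (L₁ ∩ L₂) := by
  obtain ⟨σ₁, i₁, D₁, rfl⟩ := recog_dfa h₁
  obtain ⟨σ₂, i₂, D₂, rfl⟩ := recog_dfa h₂
  set D : DFA α (σ₁ × σ₂) := ⟨fun t a => (D₁.step t.1 a, D₂.step t.2 a), (D₁.start, D₂.start),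
      {t | t.1 ∈ D₁.accept ∧ t.2 ∈ D₂.accept}⟩ with hD
  have : asSet D.accepts = Set.inter (asSet D₁.accepts) (asSet D₂.accepts) := by
    ext x
    show D.evalFrom D.start x ∈ D.accept ↔ _
    have : D.start = (D₁.start, D₂.start) := rfl
    rw [this, dfa_prod_eval]
    exact Iff.rfl
  have h2 := recog_of_dfa D
  rw [this] at h2
  exact h2

end BoolOps


section FreeGroupWords

variable {β : Type}

variable [DecidableEq β]

/-- `Dset u` : words obtained from `u` by inserting identity-valued words between letters. -/
def Dset : List (β × Bool) → Set (List (β × Bool))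
  | [] => {w | FreeGroup.mk w = 1}
  | a :: u => {w | ∃ v w', FreeGroup.mk v = 1 ∧ w' ∈ Dset u ∧ w = v ++ a :: w'}

lemma d_mk {u w : List (β × Bool)} (h : w ∈ Dset u) : FreeGroup.mk w = FreeGroup.mk u := by
  induction u generalizing w with
  | nil => rw [h, FreeGroup.one_eq_mk]
  | cons a u ih =>
    obtain ⟨v, w', hv, hw', rfl⟩ := h
    have h1 : FreeGroup.mk (v ++ a :: w') = FreeGroup.mk v * FreeGroup.mk (a :: w') := by
      rw [FreeGroup.mul_mk]
    have h2 : FreeGroup.mk (a :: w') = FreeGroup.mk [a] * FreeGroup.mk w' := by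
      rw [FreeGroup.mul_mk]; rfl
    have h3 : FreeGroup.mk (a :: u) = FreeGroup.mk [a] * FreeGroup.mk u := by
      rw [FreeGroup.mul_mk]; rfl
    rw [h1, h2, hv, one_mul, ih hw', h3]

lemma d_self (u : List (β × Bool)) : u ∈ Dset u := by
  induction u with
  | nil => exact FreeGroup.one_eq_mk.symm
  | cons a u ih => exact ⟨[], u, FreeGroup.one_eq_mk.symm, ih, rfl⟩

lemma d_insert (u : List (β × Bool)) (l r p : List (β × Bool))
    (hp : FreeGroup.mk p = 1) (h : l ++ r ∈ Dset u) : l ++ (p ++ r) ∈ Dset u := by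
  induction u generalizing l r with
  | nil =>
    show FreeGroup.mk _ = 1
    have : FreeGroup.mk (l ++ (p ++ r)) = FreeGroup.mk l * (FreeGroup.mk p * FreeGroup.mk r) := by
      rw [FreeGroup.mul_mk, FreeGroup.mul_mk]
    rw [this, hp, one_mul, FreeGroup.mul_mk]
    exact h
  | cons a u ih =>
    obtain ⟨v, w', hv, hw', heq⟩ := h
    rcases List.append_eq_append_iff.1 heq with ⟨t, hvt, hr⟩ | ⟨c, hl, hc⟩
    · -- v = l ++ t, r = t ++ a :: w'
      refine ⟨l ++ (p ++ t), w', ?_, hw', by rw [hr]; simp⟩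
      have : FreeGroup.mk (l ++ (p ++ t)) = FreeGroup.mk l * (FreeGroup.mk p * FreeGroup.mk t) := by
        rw [FreeGroup.mul_mk, FreeGroup.mul_mk]
      rw [this, hp, one_mul, FreeGroup.mul_mk, ← hvt]
      exact hv
    · -- l = v ++ c, a :: w' = c ++ r
      rcases c with _ | ⟨b, c'⟩
      · -- c = [] : l = v, r = a :: w'
        simp only [List.append_nil] at hl
        subst hl
        rcases hc with rfl
        refine ⟨l ++ p, w', ?_, hw', by simp⟩
        rw [← FreeGroup.mul_mk, hv, hp, one_mul]
      · -- c = b :: c' with b = a, w' = c' ++ r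
        obtain ⟨rfl, hw⟩ : a = b ∧ w' = c' ++ r := by
          rw [List.cons_append] at hc
          exact ⟨(List.cons.injEq _ _ _ _ ▸ hc).1, (List.cons.injEq _ _ _ _ ▸ hc).2⟩
        subst hl
        refine ⟨v, c' ++ (p ++ r), hv, ih c' r (hw ▸ hw'), by simp⟩

lemma d_of_red {w u : List (β × Bool)} (h : FreeGroup.Red w u) : w ∈ Dset u := by
  induction h using Relation.ReflTransGen.head_induction_on with
  | refl => exact d_self u
  | head hstep _ ih =>
    rename_i a b _
    cases hstep with
    | @not L₁ L₂ x bb =>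
      have hp : FreeGroup.mk [(x, bb), (x, !bb)] = 1 := by
        rw [FreeGroup.one_eq_mk, ← FreeGroup.quot_mk_eq_mk, ← FreeGroup.quot_mk_eq_mk]
        exact Quot.sound FreeGroup.Red.Step.cons_not
      have := d_insert u L₁ L₂ [(x, bb), (x, !bb)] hp ih
      simpa using this

lemma d_of_reduced {w u : List (β × Bool)} (h : FreeGroup.mk w = FreeGroup.mk u)
    (hu : FreeGroup.reduce u = u) : w ∈ Dset u :=
  d_of_red (by rw [← hu, ← FreeGroup.reduce.sound h]; exact FreeGroup.reduce.red)

/-- Benois saturation of a language. -/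
def SatL (L : Set (List (β × Bool))) : Set (List (β × Bool)) :=
  {u | ∃ w, w ∈ L ∧ w ∈ Dset u}

variable {σ : Type}

/-- closure of a state set under identity-valued words -/
def ncl (M : NFA (β × Bool) σ) (S : Set σ) : Set σ :=
  {q | ∃ w, FreeGroup.mk w = 1 ∧ q ∈ M.evalFrom S w}

/-- the saturated NFA -/
def satNFA (M : NFA (β × Bool) σ) : NFA (β × Bool) σ where
  step := fun p a => ncl M (M.step p a)
  start := ncl M M.start
  accept := M.accept

lemma sat_eval (M : NFA (β × Bool) σ) (u : List (β × Bool)) :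
    ∀ S : Set σ, (satNFA M).evalFrom (ncl M S) u = {q | ∃ w ∈ Dset u, q ∈ M.evalFrom S w} := by
  induction u with
  | nil => intro S; rfl
  | cons a u ih =>
    intro S
    rw [nfa_evalFrom_cons]
    have hstep : (satNFA M).stepSet (ncl M S) a = ncl M (M.stepSet (ncl M S) a) := by
      ext q
      rw [NFA.mem_stepSet]
      constructor
      · rintro ⟨p, hp, w, hw, hq⟩
        refine ⟨w, hw, (mem_evalFrom_iff M).2 ?_⟩
        obtain ⟨s, hs, hq'⟩ := (mem_evalFrom_iff M).1 hq
        exact ⟨s, NFA.mem_stepSet.2 ⟨p, hp, hs⟩, hq'⟩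
      · rintro ⟨w, hw, hq⟩
        obtain ⟨s, hs, hq'⟩ := (mem_evalFrom_iff M).1 hq
        obtain ⟨p, hp, hs'⟩ := NFA.mem_stepSet.1 hs
        exact ⟨p, hp, w, hw, (mem_evalFrom_iff M).2 ⟨s, hs', hq'⟩⟩
    rw [hstep, ih]
    ext q
    constructor
    · rintro ⟨w', hw', hq⟩
      obtain ⟨s, hs, hq'⟩ := (mem_evalFrom_iff M).1 hq
      obtain ⟨p, hp, hs'⟩ := NFA.mem_stepSet.1 hs
      obtain ⟨v, hv, hp'⟩ := hp
      refine ⟨v ++ a :: w', ⟨v, w', hv, hw', rfl⟩, ?_⟩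
      rw [show v ++ a :: w' = (v ++ [a]) ++ w' by simp, nfa_evalFrom_append]
      refine (mem_evalFrom_iff M).2 ⟨s, ?_, hq'⟩
      rw [nfa_evalFrom_append_singleton M, NFA.mem_stepSet]
      exact ⟨p, hp', hs'⟩
    · rintro ⟨w, ⟨v, w', hv, hw', rfl⟩, hq⟩
      rw [show v ++ a :: w' = (v ++ [a]) ++ w' by simp, nfa_evalFrom_append] at hq
      obtain ⟨s, hs, hq'⟩ := (mem_evalFrom_iff M).1 hq
      rw [nfa_evalFrom_append_singleton M, NFA.mem_stepSet] at hs
      obtain ⟨p, hp, hs'⟩ := hs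
      refine ⟨w', hw', (mem_evalFrom_iff M).2 ⟨s, NFA.mem_stepSet.2 ⟨p, ⟨v, hv, hp⟩, hs'⟩, hq'⟩⟩

lemma recog_satL {L : Set (List (β × Bool))} (h : Recog L) : Recog (SatL L) := by
  obtain ⟨σ, iσ, M, rfl⟩ := h
  refine ⟨σ, iσ, satNFA M, ?_⟩
  ext u
  rw [mem_accepts']
  have hs : (satNFA M).start = ncl M M.start := rfl
  rw [hs, sat_eval M u M.start]
  constructor
  · rintro ⟨q, hq, w, hw, hq'⟩
    exact ⟨w, (mem_accepts' M w).2 ⟨q, hq, hq'⟩, hw⟩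
  · rintro ⟨w, hw, hw'⟩
    obtain ⟨q, hq, hq'⟩ := (mem_accepts' M w).1 hw
    exact ⟨q, hq, w, hw', hq'⟩

end FreeGroupWords


section RW

variable {β : Type} [DecidableEq β]

/-- the set of reduced words -/
def RW : Set (List (β × Bool)) := {u | FreeGroup.reduce u = u}

/-- adjacent-compatibility -/
def Compat (b c : β × Bool) : Prop := ¬(b.1 = c.1 ∧ b.2 = !c.2)

lemma good_of_reduce {u : List (β × Bool)} (h : FreeGroup.reduce u = u) :
    List.Chain' (fun b c => Compat b c) u := by
  induction u with
  | nil => exact List.isChain_nil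
  | cons a u ih =>
    rw [FreeGroup.reduce.cons] at h
    have hlen : ∀ L : List (β × Bool), FreeGroup.Red L (FreeGroup.reduce L) := fun _ =>
      FreeGroup.reduce.red
    rcases hu : FreeGroup.reduce u with _ | ⟨hd, tl⟩
    · rw [hu] at h
      simp only at h
      obtain rfl : u = [] := by
        have := List.cons.injEq a [] a u ▸ h
        exact this.2.symm
      exact List.isChain_singleton a
    · rw [hu] at h
      simp only at h
      by_cases hcond : a.1 = hd.1 ∧ a.2 = !hd.2
      · rw [if_pos hcond] at h
        exfalso
        have h1 : tl.length + 2 ≤ u.length + 1 := by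
          have hred := FreeGroup.Red.length_le (hlen u)
          rw [hu] at hred
          simp only [List.length_cons] at hred
          omega
        have h2 : tl.length = u.length + 1 := by rw [h]; rfl
        omega
      · rw [if_neg hcond] at h
        have hu' : u = hd :: tl := by
          have := List.cons.injEq a (hd :: tl) a u ▸ h
          exact this.2.symm
        have hru : FreeGroup.reduce u = u := by rw [hu, hu']
        have := ih hru
        rw [hu']
        refine List.isChain_cons_cons.2 ⟨hcond, hu' ▸ this⟩

lemma reduce_of_good {u : List (β × Bool)} (h : List.Chain' (fun b c => Compat b c) u) :
    FreeGroup.reduce u = u := by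
  induction u with
  | nil => rfl
  | cons a u ih =>
    rcases u with _ | ⟨b, t⟩
    · rfl
    · have hch := List.isChain_cons_cons.1 h
      have hred : FreeGroup.reduce (b :: t) = b :: t := ih hch.2
      rw [FreeGroup.reduce.cons, hred]
      simp only
      rw [if_neg hch.1]

/-- the DFA recognizing reduced words -/
def rwDFA (β : Type) [DecidableEq β] : DFA (β × Bool) (Option (Option (β × Bool))) where
  step := fun t a => match t with
    | none => none
    | some none => some (some a)
    | some (some b) => if b.1 = a.1 ∧ b.2 = !a.2 then none else some (some a)
  start := some none
  accept := {s | s ≠ none}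

lemma rwDFA_eval (u : List (β × Bool)) :
    (List.Chain' (fun b c => Compat b c) u ∧
      (rwDFA β).evalFrom (rwDFA β).start u = some u.getLast?) ∨
    (¬ List.Chain' (fun b c => Compat b c) u ∧
      (rwDFA β).evalFrom (rwDFA β).start u = none) := by
  induction u using List.reverseRecOn with
  | nil => exact Or.inl ⟨List.isChain_nil, rfl⟩
  | append_singleton u a ih =>
    have hstep : (rwDFA β).evalFrom (rwDFA β).start (u ++ [a])
        = (rwDFA β).step ((rwDFA β).evalFrom (rwDFA β).start u) a :=
      DFA.evalFrom_append_singleton _ _ _ _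
    have hchain : List.Chain' (fun b c => Compat b c) (u ++ [a]) ↔
        List.Chain' (fun b c => Compat b c) u ∧
          ∀ b ∈ u.getLast?, Compat b a := by
      unfold List.Chain'; rw [List.isChain_append]
      simp
    rcases ih with ⟨hg, he⟩ | ⟨hg, he⟩
    · rcases hu : u.getLast? with _ | ⟨b⟩
      · -- u = []
        have : u = [] := List.getLast?_eq_none_iff.1 hu
        subst this
        left
        refine ⟨List.isChain_singleton a, ?_⟩
        rw [hstep, he, hu]
        rfl
      · by_cases hc : b.1 = a.1 ∧ b.2 = !a.2
        · right
          constructor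
          · rw [hchain]
            rintro ⟨_, hall⟩
            exact hall b hu hc
          · rw [hstep, he, hu]
            show (if b.1 = a.1 ∧ b.2 = !a.2 then none else some (some a)) = none
            rw [if_pos hc]
        · left
          constructor
          · rw [hchain]
            refine ⟨hg, ?_⟩
            intro b' hb'
            rw [hu] at hb'
            rcases Option.mem_some_iff.1 hb' with rfl
            exact hc
          · rw [hstep, he, hu]
            show (if b.1 = a.1 ∧ b.2 = !a.2 then none else some (some a)) = some (u ++ [a]).getLast?
            rw [if_neg hc, List.getLast?_append_cons]
            rfl
    · right
      constructor
      · rw [hchain]; rintro ⟨hgu, _⟩; exact hg hgu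
      · rw [hstep, he]; rfl

lemma recog_rw [Fintype β] : Recog (RW : Set (List (β × Bool))) := by
  haveI : Fintype (Option (Option (β × Bool))) := inferInstance
  have key : asSet (rwDFA β).accepts = RW := by
    ext u
    show (rwDFA β).evalFrom (rwDFA β).start u ∈ (rwDFA β).accept ↔ u ∈ RW
    have hacc : (rwDFA β).accept = {s | s ≠ none} := rfl
    rw [hacc]
    rcases rwDFA_eval u with ⟨hg, he⟩ | ⟨hg, he⟩
    · rw [he]
      simp only [Set.mem_setOf_eq, ne_eq, reduceCtorEq, not_false_eq_true, true_iff]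
      exact reduce_of_good hg
    · rw [he]
      simp only [Set.mem_setOf_eq, ne_eq, not_true_eq_false, false_iff]
      intro hred
      exact hg (good_of_reduce hred)
  rw [← key]
  exact recog_of_dfa _

end RW


section Kleene

variable {σ : Type} (M : DFA α σ)

/-- words leading from `p` to `q` with all intermediate states in `F` -/
def plang (F : Set σ) (p q : σ) : Set (List α) :=
  {w | M.evalFrom p w = q ∧
    ∀ v, v ≠ [] → v.length < w.length → v <+: w → M.evalFrom p v ∈ F}

variable {M}

lemma plang_mono {F G : Set σ} (h : F ⊆ G) (p q : σ) : plang M F p q ⊆ plang M G p q :=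
  fun w ⟨h1, h2⟩ => ⟨h1, fun v hv hlen hpre => h (h2 v hv hlen hpre)⟩

lemma plang_nil (p : σ) : [] ∈ plang M F p p :=
  ⟨rfl, fun _ _ hlen _ => absurd hlen (by simp)⟩

lemma plang_concat {F : Set σ} {r p q : σ} (hr : r ∈ F) {w₁ w₂ : List α}
    (h₁ : w₁ ∈ plang M F p r) (h₂ : w₂ ∈ plang M F r q) : w₁ ++ w₂ ∈ plang M F p q := by
  obtain ⟨he₁, hp₁⟩ := h₁
  obtain ⟨he₂, hp₂⟩ := h₂
  refine ⟨by rw [DFA.evalFrom_of_append, he₁, he₂], ?_⟩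
  intro v hv hlen hpre
  rcases le_or_gt v.length w₁.length with hle | hgt
  · have hvw₁ : v <+: w₁ :=
      List.prefix_of_prefix_length_le hpre (List.prefix_append _ _) hle
    rcases eq_or_lt_of_le hle with heq | hlt
    · rw [hvw₁.eq_of_length heq, he₁]; exact hr
    · exact hp₁ v hv hlt hvw₁
  · have hw₁v : w₁ <+: v :=
      List.prefix_of_prefix_length_le (List.prefix_append _ _) hpre hgt.le
    obtain ⟨v', rfl⟩ := hw₁v
    have hv' : v' <+: w₂ := by
      rw [List.prefix_append_right_inj] at hpre
      exact hpre
    have hv'ne : v' ≠ [] := by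
      intro h; subst h; simp at hgt
    have hv'len : v'.length < w₂.length := by
      have := hlen; simp only [List.length_append] at this; omega
    have := hp₂ v' hv'ne hv'len hv'
    rw [DFA.evalFrom_of_append, he₁]
    exact this

lemma kst_cons {L : Set (List α)} {x s : List α} (hx : x ∈ L) (hs : s ∈ kst L) :
    x ++ s ∈ kst L := by
  obtain ⟨S, rfl, hS⟩ := hs
  exact ⟨x :: S, by simp, fun y hy => by
    rcases List.mem_cons.1 hy with rfl | h
    · exact hx
    · exact hS y h⟩

lemma kst_mono {L L' : Set (List α)} (h : L ⊆ L') : kst L ⊆ kst L' := by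
  rintro x ⟨S, rfl, hS⟩
  exact ⟨S, rfl, fun y hy => h (hS y hy)⟩

lemma kst_flat {L : Set (List α)} (hu : u ∈ kst L) (hv : v ∈ kst L) : u ++ v ∈ kst L := by
  obtain ⟨S, rfl, hS⟩ := hu
  obtain ⟨T, rfl, hT⟩ := hv
  refine ⟨S ++ T, by simp, fun y hy => ?_⟩
  rcases List.mem_append.1 hy with h | h
  · exact hS y h
  · exact hT y h

lemma kst_single {L : Set (List α)} (h : w ∈ L) : w ∈ kst L :=
  ⟨[w], by simp, fun y hy => by rcases List.mem_singleton.1 hy with rfl; exact h⟩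

lemma plang_kst_subset {F : Set σ} {r : σ} (hr : r ∈ F) :
    kst (plang M F r r) ⊆ plang M F r r := by
  rintro x ⟨S, rfl, hS⟩
  induction S with
  | nil => exact plang_nil r
  | cons y S ih =>
    rw [List.flatten_cons]
    exact plang_concat hr (hS y (by simp)) (ih (fun z hz => hS z (by simp [hz])))

lemma plang_split {F : Set σ} {r s q : σ} {w : List α}
    (hw : w ∈ plang M (insert r F) s q)
    (hex : ∃ k, k ≠ 0 ∧ k < w.length ∧ M.evalFrom s (w.take k) = r) :
    ∃ v w', w = v ++ w' ∧ v ≠ [] ∧ w'.length < w.length ∧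
      v ∈ plang M F s r ∧ w' ∈ plang M (insert r F) r q := by
  classical
  obtain ⟨he, hpre⟩ := hw
  obtain ⟨hk0, hklen, hkr⟩ := Nat.find_spec hex
  set k := Nat.find hex with hkdef
  have hktake : (w.take k).length = k := by rw [List.length_take]; omega
  have hmem1 : w.take k ∈ plang M F s r := by
    refine ⟨hkr, ?_⟩
    intro u hu hulen hupre
    rw [hktake] at hulen
    have huw : u <+: w := hupre.trans (List.take_prefix _ _)
    have hmem := hpre u hu (by omega) huw
    rcases Set.mem_insert_iff.1 hmem with hr' | hF
    · exfalso
      have htake : u = w.take u.length := List.prefix_iff_eq_take.1 huw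
      have hun0 : u.length ≠ 0 := by
        intro h; exact hu (List.length_eq_zero_iff.1 h)
      exact Nat.find_min hex (show u.length < k by omega) ⟨hun0, by omega, by rw [← htake]; exact hr'⟩
    · exact hF
  have hmem2 : w.drop k ∈ plang M (insert r F) r q := by
    constructor
    · have h1 := he
      rw [← List.take_append_drop k w, DFA.evalFrom_of_append, hkr] at h1
      exact h1
    · intro u hu hulen hupre
      have hcomb : w.take k ++ u <+: w := by
        conv_rhs => rw [← List.take_append_drop k w]
        rw [List.prefix_append_right_inj]
        exact hupre
      have hne : w.take k ++ u ≠ [] := by simp [hu]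
      have hlen2 : (w.take k ++ u).length < w.length := by
        rw [List.length_append, hktake]
        rw [List.length_drop] at hulen
        omega
      have h2 := hpre _ hne hlen2 hcomb
      rw [DFA.evalFrom_of_append, hkr] at h2
      exact h2
  refine ⟨w.take k, w.drop k, (List.take_append_drop k w).symm, ?_, ?_, hmem1, hmem2⟩
  · intro h
    have := congrArg List.length h
    rw [hktake] at this
    simp only [List.length_nil] at this
    omega
  · rw [List.length_drop]; omega

lemma plang_toA {F : Set σ} {r q : σ} :
    ∀ w, w ∈ plang M (insert r F) r q →
      w ∈ cat (kst (plang M F r r)) (plang M F r q) := by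
  have main : ∀ n, ∀ w : List α, w.length = n → w ∈ plang M (insert r F) r q →
      w ∈ cat (kst (plang M F r r)) (plang M F r q) := by
    intro n
    induction n using Nat.strong_induction_on with
    | _ n ih =>
      intro w hlen hw
      subst hlen
      classical
      by_cases hex : ∃ k, k ≠ 0 ∧ k < w.length ∧ M.evalFrom r (w.take k) = r
      · obtain ⟨v, w', heq, hvne, hwlen, hv, hw'⟩ := plang_split hw hex
        have hrec := ih w'.length hwlen w' rfl hw'
        obtain ⟨y, hy, z, hz, hyz⟩ := hrec
        exact ⟨v ++ y, kst_cons hv hy, z, hz, by rw [List.append_assoc, hyz, ← heq]⟩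
      · refine ⟨[], kst_nil, w, ⟨hw.1, ?_⟩, rfl⟩
        intro u hu hulen hupre
        rcases Set.mem_insert_iff.1 (hw.2 u hu hulen hupre) with hr' | hF
        · exfalso
          refine hex ⟨u.length, ?_, by omega, ?_⟩
          · intro h; rw [List.length_eq_zero_iff] at h; exact hu h
          · rw [← List.prefix_iff_eq_take.1 hupre]; exact hr'
        · exact hF
  exact fun w => main w.length w rfl

lemma plang_insert_eq {F : Set σ} {r p q : σ} :
    plang M (insert r F) p q =
      plang M F p q ∪ cat (plang M F p r) (cat (kst (plang M F r r)) (plang M F r q)) := by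
  apply Set.eq_of_subset_of_subset
  · intro w hw
    classical
    by_cases hex : ∃ k, k ≠ 0 ∧ k < w.length ∧ M.evalFrom p (w.take k) = r
    · obtain ⟨v, w', rfl, hvne, hwlen, hv, hw'⟩ := plang_split hw hex
      exact Or.inr ⟨v, hv, _, plang_toA w' hw', rfl⟩
    · left
      refine ⟨hw.1, ?_⟩
      intro u hu hulen hupre
      rcases Set.mem_insert_iff.1 (hw.2 u hu hulen hupre) with hr' | hF
      · exact absurd ⟨u.length, by
          refine ⟨?_, by omega, ?_⟩
          · intro h; rw [List.length_eq_zero_iff] at h; exact hu h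
          · rw [← List.prefix_iff_eq_take.1 hupre]; exact hr'⟩ hex
      · exact hF
  · intro w hw
    rcases hw with hw | ⟨v, hv, z, hz, rfl⟩
    · exact plang_mono (Set.subset_insert r F) p q hw
    · obtain ⟨y, hy, t, ht, rfl⟩ := hz
      have hr : r ∈ insert r F := Set.mem_insert r F
      have h1 : v ∈ plang M (insert r F) p r := plang_mono (Set.subset_insert r F) _ _ hv
      have h2 : y ∈ plang M (insert r F) r r :=
        plang_kst_subset hr (kst_mono (plang_mono (Set.subset_insert r F) _ _) hy)
      have h3 : t ∈ plang M (insert r F) r q := plang_mono (Set.subset_insert r F) _ _ ht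
      rw [← List.append_assoc]
      exact plang_concat hr (plang_concat hr h1 h2) h3

lemma plang_empty_subset {p q : σ} : plang M (∅ : Set σ) p q ⊆ {w | w.length ≤ 1} := by
  intro w ⟨_, hpre⟩
  by_contra h
  simp only [Set.mem_setOf_eq, not_le] at h
  have := hpre (w.take 1) (by
      intro hc
      have hlen := congrArg List.length hc
      rw [List.length_take] at hlen
      simp only [List.length_nil] at hlen
      omega)
    (by rw [List.length_take]; omega) (List.take_prefix _ _)
  exact absurd this (Set.notMem_empty _)

lemma short_finite [Fintype α] : ({w : List α | w.length ≤ 1}).Finite := by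
  have : {w : List α | w.length ≤ 1} ⊆ Set.range (fun o : Option α => o.elim [] (fun a => [a])) := by
    intro w hw
    rcases w with _ | ⟨a, _ | _⟩
    · exact ⟨none, rfl⟩
    · exact ⟨some a, rfl⟩
    · exfalso; simp at hw
  exact Set.Finite.subset (Set.finite_range _) this

end Kleene


section Bridge

variable {β : Type} [DecidableEq β] [Fintype β]

lemma mk_image_cat (L₁ L₂ : Set (List (β × Bool))) :
    FreeGroup.mk '' cat L₁ L₂ = (FreeGroup.mk '' L₁) * (FreeGroup.mk '' L₂) := by
  ext x
  constructor
  · rintro ⟨w, ⟨u, hu, v, hv, rfl⟩, rfl⟩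
    exact ⟨FreeGroup.mk u, ⟨u, hu, rfl⟩, FreeGroup.mk v, ⟨v, hv, rfl⟩, FreeGroup.mul_mk⟩
  · rintro ⟨y, ⟨u, hu, rfl⟩, z, ⟨v, hv, rfl⟩, rfl⟩
    exact ⟨u ++ v, ⟨u, hu, v, hv, rfl⟩, FreeGroup.mul_mk.symm⟩

lemma mk_image_kst (L : Set (List (β × Bool))) :
    FreeGroup.mk '' kst L = ((Submonoid.closure (FreeGroup.mk '' L) : Submonoid (FreeGroup β)) :
      Set (FreeGroup β)) := by
  apply Set.eq_of_subset_of_subset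
  · rintro x ⟨w, ⟨S, rfl, hS⟩, rfl⟩
    induction S with
    | nil =>
      rw [List.flatten_nil, ← FreeGroup.one_eq_mk]
      exact Submonoid.one_mem _
    | cons y S ih =>
      rw [List.flatten_cons, ← FreeGroup.mul_mk]
      exact Submonoid.mul_mem _
        (Submonoid.subset_closure ⟨y, hS y (by simp), rfl⟩)
        (ih (fun z hz => hS z (by simp [hz])))
  · set T : Submonoid (FreeGroup β) :=
      { carrier := FreeGroup.mk '' kst L
        one_mem' := ⟨[], kst_nil, FreeGroup.one_eq_mk.symm⟩
        mul_mem' := by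
          rintro a b ⟨u, hu, rfl⟩ ⟨v, hv, rfl⟩
          exact ⟨u ++ v, kst_flat hu hv, FreeGroup.mul_mk⟩ } with hT
    have : Submonoid.closure (FreeGroup.mk '' L) ≤ T :=
      Submonoid.closure_le.2 (by rintro x ⟨w, hw, rfl⟩; exact ⟨w, kst_single hw, rfl⟩)
    exact fun x hx => this hx

lemma isRat_biUnion {ι : Type} (s : Finset ι) (f : ι → Set (FreeGroup β))
    (h : ∀ i, IsRational (f i)) : IsRational (⋃ i ∈ s, f i) := by
  classical
  induction s using Finset.induction_on with
  | empty => simpa using IsRational.finite ∅ Set.finite_empty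
  | insert _ _ hnotin ih =>
    rename_i a s
    rw [Finset.set_biUnion_insert]
    exact IsRational.union _ _ (h a) ih

lemma isRat_of_recog {L : Set (List (β × Bool))} (h : Recog L) :
    IsRational (FreeGroup.mk '' L) := by
  classical
  obtain ⟨σ, iσ, D, rfl⟩ := recog_dfa h
  have hplang : ∀ (F : Finset σ) (p q : σ), IsRational (FreeGroup.mk '' plang D (↑F) p q) := by
    intro F
    induction F using Finset.induction_on with
    | empty =>
      intro p q
      refine IsRational.finite _ (Set.Finite.image _ ?_)
      have : plang D (↑(∅ : Finset σ)) p q ⊆ {w | w.length ≤ 1} := by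
        rw [Finset.coe_empty]; exact plang_empty_subset
      exact Set.Finite.subset short_finite this
    | insert _ _ hnotin ih =>
      rename_i r F
      intro p q
      rw [Finset.coe_insert, plang_insert_eq, Set.image_union, mk_image_cat, mk_image_cat,
        mk_image_kst]
      exact IsRational.union _ _ (ih p q)
        (IsRational.mul _ _ (ih p r)
          (IsRational.mul _ _ (IsRational.star _ (ih r r)) (ih r q)))
  have haccept : asSet D.accepts =
      ⋃ q ∈ (Finset.univ : Finset σ), (if q ∈ D.accept then plang D Set.univ D.start q else ∅) := by
    ext w
    constructor
    · intro hw
      have hw' : D.evalFrom D.start w ∈ D.accept := hw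
      refine Set.mem_biUnion (Finset.mem_univ (D.evalFrom D.start w)) ?_
      rw [if_pos hw']
      exact ⟨rfl, fun v _ _ _ => Set.mem_univ _⟩
    · intro hmem
      obtain ⟨q, _, hw⟩ := Set.mem_iUnion₂.1 hmem
      by_cases hq : q ∈ D.accept
      · rw [if_pos hq] at hw
        show D.evalFrom D.start w ∈ D.accept
        rw [hw.1]; exact hq
      · rw [if_neg hq] at hw
        exact absurd hw (Set.notMem_empty _)
  rw [haccept, Set.image_iUnion₂]
  have : ∀ q : σ, IsRational (FreeGroup.mk ''
      (if q ∈ D.accept then plang D Set.univ D.start q else ∅)) := by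
    intro q
    by_cases hq : q ∈ D.accept
    · rw [if_pos hq]
      have := hplang Finset.univ D.start q
      rwa [Finset.coe_univ] at this
    · rw [if_neg hq]
      simpa using IsRational.finite ∅ Set.finite_empty
  exact isRat_biUnion Finset.univ _ this

lemma cat_single (a : β × Bool) (w : List (β × Bool)) :
    cat {[a]} ({w} : Set (List (β × Bool))) = {a :: w} := by
  ext x
  constructor
  · rintro ⟨u, hu, v, hv, rfl⟩
    rcases Set.mem_singleton_iff.1 hu with rfl
    rcases Set.mem_singleton_iff.1 hv with rfl
    rfl
  · rintro rfl
    exact ⟨[a], rfl, w, rfl, rfl⟩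

lemma recog_word (w : List (β × Bool)) : Recog ({w} : Set (List (β × Bool))) := by
  induction w with
  | nil => exact recog_epsilon
  | cons a w ih =>
    rw [← cat_single a w]
    exact recog_cat (recog_char a) ih

lemma isRat_to_recog {X : Set (FreeGroup β)} (h : IsRational X) :
    ∃ L : Set (List (β × Bool)), Recog L ∧ X = FreeGroup.mk '' L := by
  induction h with
  | finite s hs =>
    refine Set.Finite.induction_on _ hs ⟨∅, recog_empty, by simp⟩ ?_
    rintro a s _ _ ⟨L, hL, rfl⟩
    refine ⟨{a.toWord} ∪ L, recog_union (recog_word _) hL, ?_⟩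
    rw [Set.image_union, Set.image_singleton, FreeGroup.mk_toWord, Set.insert_eq]
  | union s t _ _ ihs iht =>
    obtain ⟨L₁, hL₁, rfl⟩ := ihs
    obtain ⟨L₂, hL₂, rfl⟩ := iht
    exact ⟨L₁ ∪ L₂, recog_union hL₁ hL₂, (Set.image_union _ _ _).symm⟩
  | mul s t _ _ ihs iht =>
    obtain ⟨L₁, hL₁, rfl⟩ := ihs
    obtain ⟨L₂, hL₂, rfl⟩ := iht
    exact ⟨cat L₁ L₂, recog_cat hL₁ hL₂, (mk_image_cat _ _).symm⟩
  | star s _ ihs =>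
    obtain ⟨L, hL, rfl⟩ := ihs
    exact ⟨kst L, recog_kst hL, (mk_image_kst _).symm⟩

lemma benois_inter {X Y : Set (FreeGroup β)} (hX : IsRational X) (hY : IsRational Y) :
    IsRational (X ∩ Y) := by
  obtain ⟨L₁, hL₁, rfl⟩ := isRat_to_recog hX
  obtain ⟨L₂, hL₂, rfl⟩ := isRat_to_recog hY
  have hrec : Recog (SatL L₁ ∩ (SatL L₂ ∩ RW)) :=
    recog_inter (recog_satL hL₁) (recog_inter (recog_satL hL₂) recog_rw)
  have key : FreeGroup.mk '' L₁ ∩ FreeGroup.mk '' L₂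
      = FreeGroup.mk '' (SatL L₁ ∩ (SatL L₂ ∩ RW)) := by
    ext x
    constructor
    · rintro ⟨⟨w₁, hw₁, hx₁⟩, ⟨w₂, hw₂, hx₂⟩⟩
      refine ⟨x.toWord, ⟨⟨w₁, hw₁, ?_⟩, ⟨w₂, hw₂, ?_⟩, ?_⟩, FreeGroup.mk_toWord⟩
      · exact d_of_reduced (by rw [hx₁, FreeGroup.mk_toWord]) (FreeGroup.reduce_toWord x)
      · exact d_of_reduced (by rw [hx₂, FreeGroup.mk_toWord]) (FreeGroup.reduce_toWord x)
      · exact FreeGroup.reduce_toWord x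
    · rintro ⟨u, ⟨⟨w₁, hw₁, hd₁⟩, ⟨w₂, hw₂, hd₂⟩, _⟩, rfl⟩
      exact ⟨⟨w₁, hw₁, d_mk hd₁⟩, ⟨w₂, hw₂, d_mk hd₂⟩⟩
  rw [key]
  exact isRat_of_recog hrec

lemma benois_compl {X : Set (FreeGroup β)} (hX : IsRational X) : IsRational Xᶜ := by
  obtain ⟨L, hL, rfl⟩ := isRat_to_recog hX
  have hrec : Recog ((SatL L)ᶜ ∩ RW) := recog_inter (recog_compl (recog_satL hL)) recog_rw
  have key : (FreeGroup.mk '' L)ᶜ = FreeGroup.mk '' ((SatL L)ᶜ ∩ RW) := by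
    ext x
    constructor
    · intro hx
      refine ⟨x.toWord, ⟨?_, FreeGroup.reduce_toWord x⟩, FreeGroup.mk_toWord⟩
      rintro ⟨w, hw, hd⟩
      exact hx ⟨w, hw, by rw [d_mk hd, FreeGroup.mk_toWord]⟩
    · rintro ⟨u, ⟨hns, hru⟩, rfl⟩
      rintro ⟨w, hw, hmk⟩
      exact hns ⟨w, hw, d_of_reduced hmk hru⟩
  rw [key]
  exact isRat_of_recog hrec

end Bridge


end Benois

theorem rat_free_group_closed_boolean (n : ℕ) :
    (∀ X Y : Set (FreeGroup (Fin n)), IsRational X → IsRational Y → IsRational (X ∩ Y)) ∧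
    (∀ X : Set (FreeGroup (Fin n)), IsRational X → IsRational Xᶜ) :=
  ⟨fun _ _ hX hY => Benois.benois_inter hX hY, fun _ hX => Benois.benois_compl hX⟩
end

section
/- Every finitely generated residually finite group is hopfian: every surjective endomorphism is an automorphism (Mal'cev's theorem). -/
theorem malcev_hopfian (G : Type*) [Group G] (hfg : Group.FG G)
    (hrf : ∀ g : G, g ≠ 1 → ∃ (H : Type) (_ : Group H) (_ : Fintype H)
      (f : G →* H), f g ≠ 1)
    (φ : G →* G) (hsurj : Function.Surjective φ) :
    Function.Injective φ := by
  rw [← MonoidHom.ker_eq_bot_iff, eq_bot_iff]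
  intro g (hg : φ g = 1)
  by_contra hg1
  have hg1 : g ≠ 1 := fun h => hg1 (h ▸ Subgroup.one_mem _)
  obtain ⟨H, _, _, ψ, hψ⟩ := hrf g hg1
  -- Hom(G,H) is finite
  obtain ⟨S, hS, hSfin⟩ := Group.fg_iff.mp hfg
  have hfin : Finite (G →* H) := by
    have : Function.Injective (fun f : G →* H => (fun s : S => f s)) := by
      intro f f' h
      refine MonoidHom.eq_of_eqOn_dense hS ?_
      intro x hx
      exact congrFun h ⟨x, hx⟩
    have : Finite S := hSfin
    exact Finite.of_injective _ ‹Function.Injective _›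
  -- precomposition with φ is injective, hence surjective
  have hinj : Function.Injective (fun f : G →* H => f.comp φ) := by
    intro f f' h
    ext x
    obtain ⟨y, rfl⟩ := hsurj x
    exact congrArg (fun m : G →* H => m y) h
  obtain ⟨f, hf⟩ := (Finite.injective_iff_surjective.mp hinj) ψ
  apply hψ
  have := congrArg (fun m : G →* H => m g) hf
  simp only [MonoidHom.comp_apply] at this
  rw [← this, hg, map_one]
end
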